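/- Fix γ ∈ [1/2, 1) and Γ > 0, and define κ_{γ,Γ}(a,b) := b^{−γ} a^{γ−1} if b < a and κ_{γ,Γ}(a,b) := a^{Γ−γ} b^{−(1−γ+Γ)} if b ≥ a, for a, b ∈ (0,1). For ε ∈ (0,1) set A_ε(a) := ∫_ε^1 κ_{γ,Γ}(a,b) db and B_ε(a) := ∫_ε^1 κ_{γ,Γ}(a,b) · ( ∫_ε^1 κ_{γ,Γ}(w,b) dw ) db. Then there exist constants 0 < c ≤ C < ∞ and ε₀ ∈ (0,1) such that for all ε ∈ (0, ε₀): if γ = 1/2 then c · log(1/ε) ≤ ∫_ε^1 A_ε(a) B_ε(a) da ≤ C · log(1/ε), and if γ ∈ (1/2, 1) then c · ε^{1−2γ} ≤ ∫_ε^1 A_ε(a) B_ε(a) da ≤ C · ε^{1−2γ}. -/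

import Mathlib

open MeasureTheory

/-- The spatially integrated connection kernel `κ_{γ,Γ}(a,b)` of the directed
age-dependent random connection model: `b^{-γ} a^{γ-1}` if `b < a` (forward) and
`a^{Γ-γ} b^{-(1-γ+Γ)}` if `b ≥ a` (reciprocal). -/
noncomputable def kappa (γ Γ a b : ℝ) : ℝ :=
  if b < a then b ^ (-γ) * a ^ (γ - 1) else a ^ (Γ - γ) * b ^ (-(1 - γ + Γ))

/-- The truncated expected open-bow-tie count
`∫_ε^1 A_ε(a) B_ε(a) da` with `A_ε(a) = ∫_ε^1 κ(a,b) db` and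
`B_ε(a) = ∫_ε^1 κ(a,b) (∫_ε^1 κ(w,b) dw) db`. -/
noncomputable def openBowTie (γ Γ ε : ℝ) : ℝ :=
  ∫ a in ε..1,
    (∫ b in ε..1, kappa γ Γ a b) *
    (∫ b in ε..1, kappa γ Γ a b * ∫ w in ε..1, kappa γ Γ w b)

open Set Real intervalIntegral

theorem II_of_bdd {f : ℝ → ℝ} {u v : ℝ} (M : ℝ) (hm : Measurable f)
    (h : ∀ x ∈ Set.uIoc u v, |f x| ≤ M) : IntervalIntegrable f volume u v := by
  rw [intervalIntegrable_iff]
  refine Integrable.mono' (g := fun _ => M)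
    (integrableOn_const measure_Ioc_lt_top.ne)
    hm.aestronglyMeasurable ?_
  filter_upwards [ae_restrict_mem measurableSet_uIoc] with x hx
  simpa using h x hx

theorem meas_rpow_const (c : ℝ) : Measurable fun x : ℝ => x ^ c := by
  refine measurable_of_continuousOn_compl_singleton (0 : ℝ) ?_
  exact continuousOn_of_forall_continuousAt fun x hx =>
    Real.continuousAt_rpow_const x c (Or.inl hx)

theorem kappa_nonneg {γ Γ : ℝ} {a b : ℝ} (ha : 0 ≤ a) (hb : 0 ≤ b) :
    0 ≤ kappa γ Γ a b := by
  unfold kappa; split <;> positivity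

theorem kappa_recip {γ Γ a b : ℝ} (h : a ≤ b) :
    kappa γ Γ a b = a ^ (Γ - γ) * b ^ (-(1 - γ + Γ)) := by
  unfold kappa; rw [if_neg (not_lt.2 h)]

theorem kappa_forward {γ Γ a b : ℝ} (hb : 0 < b) (h : b ≤ a) :
    kappa γ Γ a b = b ^ (-γ) * a ^ (γ - 1) := by
  rcases lt_or_eq_of_le h with h' | h'
  · unfold kappa; rw [if_pos h']
  · subst h'
    rw [kappa_recip le_rfl, ← Real.rpow_add hb, ← Real.rpow_add hb]
    ring_nf

theorem kappa_meas {γ Γ : ℝ} : Measurable fun p : ℝ × ℝ => kappa γ Γ p.1 p.2 := by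
  unfold kappa
  refine Measurable.ite (measurableSet_lt measurable_snd measurable_fst) ?_ ?_
  · exact ((meas_rpow_const _).comp measurable_snd).mul
      ((meas_rpow_const _).comp measurable_fst)
  · exact ((meas_rpow_const _).comp measurable_fst).mul
      ((meas_rpow_const _).comp measurable_snd)

theorem kappa_meas_right {γ Γ a : ℝ} : Measurable (kappa γ Γ a) :=
  kappa_meas.comp (measurable_const.prodMk measurable_id)

theorem kappa_meas_left {γ Γ b : ℝ} : Measurable (fun w => kappa γ Γ w b) :=
  kappa_meas.comp (measurable_id.prodMk measurable_const)

section
variable {γ Γ ε : ℝ} (hγ0 : 1/2 ≤ γ) (hγ1 : γ < 1) (hΓ : 0 < Γ) (hε : 0 < ε)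

include hγ0 hγ1 hΓ hε in
theorem kappa_le {a b : ℝ} (ha : a ∈ Icc ε 1) (hb : b ∈ Icc ε 1) :
    kappa γ Γ a b ≤ ε ^ (-(1:ℝ)) + ε ^ (-γ) * ε ^ (-(1 - γ + Γ)) := by
  have hγ : (0:ℝ) < γ := by linarith
  have ha0 : 0 < a := lt_of_lt_of_le hε ha.1
  have hb0 : 0 < b := lt_of_lt_of_le hε hb.1
  have h1 : (0:ℝ) ≤ ε ^ (-(1:ℝ)) := by positivity
  have h2 : (0:ℝ) ≤ ε ^ (-γ) * ε ^ (-(1 - γ + Γ)) := by positivity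
  unfold kappa; split
  · refine le_add_of_le_of_nonneg ?_ h2
    calc b ^ (-γ) * a ^ (γ - 1) ≤ ε ^ (-γ) * ε ^ (γ - 1) := by
          apply mul_le_mul (Real.rpow_le_rpow_of_nonpos hε hb.1 (by linarith))
            (Real.rpow_le_rpow_of_nonpos hε ha.1 (by linarith)) (by positivity) (by positivity)
      _ = ε ^ (-(1:ℝ)) := by rw [← Real.rpow_add hε]; congr 1; ring
  · refine le_add_of_nonneg_of_le h1 ?_
    apply mul_le_mul ?_ (Real.rpow_le_rpow_of_nonpos hε hb.1 (by linarith)) (by positivity)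
      (by positivity)
    calc a ^ (Γ - γ) = a ^ Γ * a ^ (-γ) := by rw [← Real.rpow_add ha0]; ring_nf
      _ ≤ 1 * ε ^ (-γ) := by
          apply mul_le_mul (Real.rpow_le_one ha0.le ha.2 hΓ.le)
            (Real.rpow_le_rpow_of_nonpos hε ha.1 (by linarith)) (by positivity) one_pos.le
      _ = ε ^ (-γ) := one_mul _

include hγ0 hγ1 hΓ hε in
theorem kappa_right_II {a u v : ℝ} (ha : a ∈ Icc ε 1) (hu : u ∈ Icc ε 1)
    (hv : v ∈ Icc ε 1) : IntervalIntegrable (kappa γ Γ a) volume u v := by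
  refine II_of_bdd (ε ^ (-(1:ℝ)) + ε ^ (-γ) * ε ^ (-(1 - γ + Γ))) kappa_meas_right fun x hx => ?_
  have hx' : x ∈ Icc ε 1 := Set.uIcc_subset_Icc hu hv (Set.uIoc_subset_uIcc hx)
  rw [abs_of_nonneg (kappa_nonneg (le_trans hε.le ha.1) (le_trans hε.le hx'.1))]
  exact kappa_le hγ0 hγ1 hΓ hε ha hx'

include hγ0 hγ1 hΓ hε in
theorem kappa_left_II {b u v : ℝ} (hb : b ∈ Icc ε 1) (hu : u ∈ Icc ε 1)
    (hv : v ∈ Icc ε 1) : IntervalIntegrable (fun w => kappa γ Γ w b) volume u v := by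
  refine II_of_bdd (ε ^ (-(1:ℝ)) + ε ^ (-γ) * ε ^ (-(1 - γ + Γ))) kappa_meas_left fun x hx => ?_
  have hx' : x ∈ Icc ε 1 := Set.uIcc_subset_Icc hu hv (Set.uIoc_subset_uIcc hx)
  rw [abs_of_nonneg (kappa_nonneg (le_trans hε.le hx'.1) (le_trans hε.le hb.1))]
  exact kappa_le hγ0 hγ1 hΓ hε hx' hb

end

noncomputable def Wform (γ Γ ε b : ℝ) : ℝ :=
  (b ^ (Γ - γ + 1) - ε ^ (Γ - γ + 1)) / (Γ - γ + 1) * b ^ (-(1 - γ + Γ)) +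
  b ^ (-γ) * ((1 - b ^ γ) / γ)

section
variable {γ Γ ε : ℝ} (hγ0 : 1/2 ≤ γ) (hγ1 : γ < 1) (hΓ : 0 < Γ) (hε : 0 < ε) (hε1 : ε ≤ 1)

include hγ0 hγ1 hΓ hε hε1 in
theorem W_eq {b : ℝ} (hb : b ∈ Icc ε 1) :
    (∫ w in ε..1, kappa γ Γ w b) = Wform γ Γ ε b := by
  have hb0 : 0 < b := lt_of_lt_of_le hε hb.1
  have h1 : IntervalIntegrable (fun w => kappa γ Γ w b) volume ε b :=
    kappa_left_II hγ0 hγ1 hΓ hε hb ⟨le_rfl, hε1⟩ hb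
  have h2 : IntervalIntegrable (fun w => kappa γ Γ w b) volume b 1 :=
    kappa_left_II hγ0 hγ1 hΓ hε hb hb ⟨hε1, le_rfl⟩
  rw [← intervalIntegral.integral_add_adjacent_intervals h1 h2]
  have e1 : (∫ w in ε..b, kappa γ Γ w b)
      = (b ^ (Γ - γ + 1) - ε ^ (Γ - γ + 1)) / (Γ - γ + 1) * b ^ (-(1 - γ + Γ)) := by
    rw [intervalIntegral.integral_congr (g := fun w => w ^ (Γ - γ) * b ^ (-(1 - γ + Γ))) ?_]
    · rw [intervalIntegral.integral_mul_const, integral_rpow (Or.inl (by linarith))]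
    · intro w hw
      rw [Set.uIcc_of_le hb.1] at hw
      exact kappa_recip hw.2
  have e2 : (∫ w in b..1, kappa γ Γ w b) = b ^ (-γ) * ((1 - b ^ γ) / γ) := by
    rw [intervalIntegral.integral_congr (g := fun w => b ^ (-γ) * w ^ (γ - 1)) ?_]
    · rw [intervalIntegral.integral_const_mul, integral_rpow (Or.inl (by linarith))]
      rw [Real.one_rpow, sub_add_cancel]
    · intro w hw
      rw [Set.uIcc_of_le hb.2] at hw
      exact kappa_forward hb0 hw.1
  rw [e1, e2, Wform]

end

section
variable {γ Γ ε : ℝ} (hγ0 : 1/2 ≤ γ) (hγ1 : γ < 1) (hΓ : 0 < Γ) (hε : 0 < ε)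

include hγ0 hγ1 hΓ hε in
theorem Wf_nonneg {b : ℝ} (hb : b ∈ Icc ε 1) : 0 ≤ Wform γ Γ ε b := by
  have hb0 : 0 < b := lt_of_lt_of_le hε hb.1
  have hs : (0:ℝ) < Γ - γ + 1 := by linarith
  have h1 : ε ^ (Γ - γ + 1) ≤ b ^ (Γ - γ + 1) := Real.rpow_le_rpow hε.le hb.1 hs.le
  have h2 : b ^ γ ≤ 1 := Real.rpow_le_one hb0.le hb.2 (by linarith)
  have h3 : (0:ℝ) ≤ b ^ (-(1-γ+Γ)) := Real.rpow_nonneg hb0.le _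
  have h4 : (0:ℝ) ≤ b ^ (-γ) := Real.rpow_nonneg hb0.le _
  have hγ : (0:ℝ) < γ := by linarith
  rw [Wform]
  have : (0:ℝ) ≤ (b ^ (Γ - γ + 1) - ε ^ (Γ - γ + 1)) / (Γ - γ + 1) := by
    apply div_nonneg (by linarith) hs.le
  have : (0:ℝ) ≤ (1 - b ^ γ) / γ := div_nonneg (by linarith) hγ.le
  positivity

include hγ0 hγ1 hΓ in
theorem Wf_le {b : ℝ} (hb0 : 0 < b) (hb1 : b ≤ 1) (hε0 : 0 ≤ ε) :
    Wform γ Γ ε b ≤ (1/(Γ - γ + 1) + 1/γ) * b ^ (-γ) := by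
  have hγ : (0:ℝ) < γ := by linarith
  have hs : (0:ℝ) < Γ - γ + 1 := by linarith
  have hbneg : (1:ℝ) ≤ b ^ (-γ) :=
    Real.one_le_rpow_of_pos_of_le_one_of_nonpos hb0 hb1 (by linarith)
  have h4 : (0:ℝ) ≤ b ^ (-γ) := Real.rpow_nonneg hb0.le _
  have key : b ^ (Γ - γ + 1) * b ^ (-(1-γ+Γ)) = 1 := by
    rw [← Real.rpow_add hb0, show Γ - γ + 1 + -(1-γ+Γ) = 0 from by ring, Real.rpow_zero]
  have t1 : (b ^ (Γ - γ + 1) - ε ^ (Γ - γ + 1)) / (Γ - γ + 1) * b ^ (-(1-γ+Γ))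
      ≤ 1/(Γ - γ + 1) * b ^ (-γ) := by
    calc (b ^ (Γ - γ + 1) - ε ^ (Γ - γ + 1)) / (Γ - γ + 1) * b ^ (-(1-γ+Γ))
        ≤ b ^ (Γ - γ + 1) / (Γ - γ + 1) * b ^ (-(1-γ+Γ)) := by
          have hεp : (0:ℝ) ≤ ε ^ (Γ - γ + 1) := Real.rpow_nonneg hε0 _
          have h5 : (0:ℝ) ≤ b ^ (-(1-γ+Γ)) := Real.rpow_nonneg hb0.le _
          exact mul_le_mul_of_nonneg_right ((div_le_div_iff_of_pos_right hs).2 (by linarith)) h5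
      _ = 1/(Γ - γ + 1) := by rw [div_mul_eq_mul_div, key]
      _ ≤ 1/(Γ - γ + 1) * b ^ (-γ) := le_mul_of_one_le_right (by positivity) hbneg
  have t2 : b ^ (-γ) * ((1 - b ^ γ) / γ) ≤ 1/γ * b ^ (-γ) := by
    rw [mul_comm]
    have : (0:ℝ) ≤ b ^ γ := Real.rpow_nonneg hb0.le _
    exact mul_le_mul_of_nonneg_right ((div_le_div_iff_of_pos_right hγ).2 (by linarith)) h4
  rw [Wform]; rw [add_mul]; exact add_le_add t1 t2

end

section
variable {γ Γ ε : ℝ} (hγ0 : 1/2 ≤ γ) (hγ1 : γ < 1) (hΓ : 0 < Γ) (hε : 0 < ε)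

include hγ0 hγ1 hΓ hε in
theorem Wf_ge {b : ℝ} (hb : b ∈ Icc (2*ε) (1/2)) :
    1/(4*γ) * b ^ (-γ) ≤ Wform γ Γ ε b := by
  have hγ : (0:ℝ) < γ := by linarith
  have hb0 : 0 < b := lt_of_lt_of_le (by linarith) hb.1
  have hs : (0:ℝ) < Γ - γ + 1 := by linarith
  have h4 : (0:ℝ) ≤ b ^ (-γ) := Real.rpow_nonneg hb0.le _
  have first : (0:ℝ) ≤ (b ^ (Γ - γ + 1) - ε ^ (Γ - γ + 1)) / (Γ - γ + 1) * b ^ (-(1-γ+Γ)) := by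
    have h1 : ε ^ (Γ - γ + 1) ≤ b ^ (Γ - γ + 1) :=
      Real.rpow_le_rpow hε.le (by linarith [hb.1]) hs.le
    have h5 : (0:ℝ) ≤ b ^ (-(1-γ+Γ)) := Real.rpow_nonneg hb0.le _
    apply mul_nonneg (div_nonneg (by linarith) hs.le) h5
  have hbγ : b ^ γ ≤ 3/4 := by
    calc b ^ γ ≤ (1/2:ℝ) ^ γ := Real.rpow_le_rpow hb0.le hb.2 hγ.le
      _ ≤ (1/2:ℝ) ^ ((1:ℝ)/2) :=
          Real.rpow_le_rpow_of_exponent_ge (by norm_num) (by norm_num) hγ0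
      _ ≤ 3/4 := by
          have hx2 : (((1:ℝ)/2) ^ ((1:ℝ)/2)) ^ (2:ℕ) = 1/2 := by
            rw [← Real.rpow_natCast (((1:ℝ)/2) ^ ((1:ℝ)/2)) 2, ← Real.rpow_mul (by norm_num)]
            norm_num
          have hx0 : (0:ℝ) ≤ ((1:ℝ)/2) ^ ((1:ℝ)/2) := Real.rpow_nonneg (by norm_num) _
          nlinarith [sq_nonneg (((1:ℝ)/2) ^ ((1:ℝ)/2) - 3/4)]
  have second : 1/(4*γ) * b ^ (-γ) ≤ b ^ (-γ) * ((1 - b ^ γ) / γ) := by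
    rw [mul_comm (b ^ (-γ))]
    apply mul_le_mul_of_nonneg_right _ h4
    rw [div_le_div_iff₀ (by linarith) hγ]
    nlinarith
  rw [Wform]; linarith

include hγ0 hγ1 hΓ hε in
theorem A_upper {a : ℝ} (ha : a ∈ Icc ε 1) :
    (∫ b in ε..1, kappa γ Γ a b)
      ≤ (1/(1-γ) + 1/(Γ - min γ Γ / 2)) * a ^ (min γ Γ / 2 - γ) := by
  have hγ : (0:ℝ) < γ := by linarith
  set δ := min γ Γ / 2 with hδdef
  have hδ0 : 0 < δ := by have := lt_min hγ hΓ; positivity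
  have hδγ : δ < γ := by have := min_le_left γ Γ; simp only [hδdef]; linarith
  have hδΓ : δ < Γ := by have := min_le_right γ Γ; simp only [hδdef]; linarith
  have ha0 : 0 < a := lt_of_lt_of_le hε ha.1
  have hε1 : ε ≤ 1 := le_trans ha.1 ha.2
  have haδ : (1:ℝ) ≤ a ^ (δ - γ) :=
    Real.one_le_rpow_of_pos_of_le_one_of_nonpos ha0 ha.2 (by linarith)
  have h1 := kappa_right_II hγ0 hγ1 hΓ hε ha ⟨le_rfl, hε1⟩ ha
  have h2 := kappa_right_II hγ0 hγ1 hΓ hε ha ha ⟨hε1, le_rfl⟩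
  rw [← intervalIntegral.integral_add_adjacent_intervals h1 h2]
  have e1 : (∫ b in ε..a, kappa γ Γ a b) ≤ 1/(1-γ) * a ^ (δ - γ) := by
    rw [intervalIntegral.integral_congr (g := fun b => b ^ (-γ) * a ^ (γ-1))
      (fun b hb => by
        rw [Set.uIcc_of_le ha.1] at hb
        exact kappa_forward (lt_of_lt_of_le hε hb.1) hb.2)]
    rw [intervalIntegral.integral_mul_const, integral_rpow (Or.inl (by linarith))]
    have key : a ^ (-γ+1) * a ^ (γ-1) = 1 := by
      rw [← Real.rpow_add ha0, show -γ+1 + (γ-1) = 0 from by ring, Real.rpow_zero]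
    calc (a ^ (-γ+1) - ε ^ (-γ+1))/(-γ+1) * a ^ (γ-1)
        ≤ a ^ (-γ+1)/(-γ+1) * a ^ (γ-1) := by
          have hεp : (0:ℝ) ≤ ε ^ (-γ+1) := Real.rpow_nonneg hε.le _
          exact mul_le_mul_of_nonneg_right
            ((div_le_div_iff_of_pos_right (by linarith)).2 (by linarith))
            (Real.rpow_nonneg ha0.le _)
      _ = 1/(-γ+1) := by rw [div_mul_eq_mul_div, key]
      _ ≤ 1/(1-γ) * a ^ (δ - γ) := by
          rw [show -γ+1 = 1-γ from by ring]
          exact le_mul_of_one_le_right (div_nonneg zero_le_one (by linarith)) haδ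
  have e2 : (∫ b in a..1, kappa γ Γ a b) ≤ 1/(Γ-δ) * a ^ (δ - γ) := by
    rw [intervalIntegral.integral_congr (g := fun b => a ^ (Γ-γ) * b ^ (-(1-γ+Γ)))
      (fun b hb => by rw [Set.uIcc_of_le ha.2] at hb; exact kappa_recip hb.1)]
    have hII1 : IntervalIntegrable (fun b : ℝ => a ^ (Γ-γ) * b ^ (-(1-γ+Γ))) volume a 1 :=
      (intervalIntegrable_rpow (Or.inr (Set.notMem_uIcc_of_lt ha0 one_pos))).const_mul _
    have hII2 : IntervalIntegrable (fun b : ℝ => a ^ (Γ-γ) * b ^ (δ-1-Γ)) volume a 1 :=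
      (intervalIntegrable_rpow (Or.inr (Set.notMem_uIcc_of_lt ha0 one_pos))).const_mul _
    have mono : (∫ b in a..1, a ^ (Γ-γ) * b ^ (-(1-γ+Γ)))
        ≤ ∫ b in a..1, a ^ (Γ-γ) * b ^ (δ-1-Γ) := by
      apply intervalIntegral.integral_mono_on ha.2 hII1 hII2
      intro x hx
      have hx0 : 0 < x := lt_of_lt_of_le ha0 hx.1
      apply mul_le_mul_of_nonneg_left _ (Real.rpow_nonneg ha0.le _)
      rw [show -(1-γ+Γ) = γ-1-Γ from by ring]
      exact Real.rpow_le_rpow_of_exponent_ge hx0 hx.2 (by linarith)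
    refine le_trans mono ?_
    rw [intervalIntegral.integral_const_mul,
      integral_rpow (Or.inr ⟨by intro h; exact absurd (by linarith : δ = Γ) (ne_of_lt hδΓ),
        Set.notMem_uIcc_of_lt ha0 one_pos⟩)]
    rw [Real.one_rpow, show δ-1-Γ+1 = δ-Γ from by ring]
    have flip : (1 - a ^ (δ-Γ))/(δ-Γ) = (a ^ (δ-Γ) - 1)/(Γ-δ) := by
      rw [div_eq_div_iff (by linarith) (by linarith)]; ring
    rw [flip]
    calc a ^ (Γ-γ) * ((a ^ (δ-Γ) - 1)/(Γ-δ))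
        ≤ a ^ (Γ-γ) * (a ^ (δ-Γ)/(Γ-δ)) := by
          apply mul_le_mul_of_nonneg_left _ (Real.rpow_nonneg ha0.le _)
          exact (div_le_div_iff_of_pos_right (by linarith)).2 (by linarith)
      _ = 1/(Γ-δ) * a ^ (δ - γ) := by
          rw [show a ^ (Γ-γ) * (a ^ (δ-Γ)/(Γ-δ)) = a ^ (Γ-γ) * a ^ (δ-Γ) * (1/(Γ-δ)) from by
              ring,
            ← Real.rpow_add ha0, show Γ-γ+(δ-Γ) = δ-γ from by ring]
          ring
  calc (∫ b in ε..a, kappa γ Γ a b) + (∫ b in a..1, kappa γ Γ a b)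
      ≤ 1/(1-γ) * a ^ (δ - γ) + 1/(Γ-δ) * a ^ (δ - γ) := add_le_add e1 e2
    _ = (1/(1-γ) + 1/(Γ - δ)) * a ^ (δ - γ) := by ring

end

section
variable {γ Γ ε : ℝ} (hγ0 : 1/2 ≤ γ) (hγ1 : γ < 1) (hΓ : 0 < Γ) (hε : 0 < ε)

include hγ0 hγ1 hΓ hε in
theorem A_lower {a : ℝ} (ha : a ∈ Icc (2*ε) 1) :
    (1 - 2 ^ (γ-1 : ℝ))/(1-γ) ≤ ∫ b in ε..1, kappa γ Γ a b := by
  have hγ : (0:ℝ) < γ := by linarith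
  have ha0 : 0 < a := lt_of_lt_of_le (by linarith) ha.1
  have hεa : ε ≤ a := le_trans (by linarith) ha.1
  have hε1 : ε ≤ 1 := le_trans hεa ha.2
  have haI : a ∈ Icc ε 1 := ⟨hεa, ha.2⟩
  have h1 := kappa_right_II hγ0 hγ1 hΓ hε haI ⟨le_rfl, hε1⟩ haI
  have h2 := kappa_right_II hγ0 hγ1 hΓ hε haI haI ⟨hε1, le_rfl⟩
  rw [← intervalIntegral.integral_add_adjacent_intervals h1 h2]
  have e2 : 0 ≤ ∫ b in a..1, kappa γ Γ a b :=
    intervalIntegral.integral_nonneg ha.2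
      (fun x hx => kappa_nonneg ha0.le (le_trans ha0.le hx.1))
  have e1 : (1 - 2 ^ (γ-1 : ℝ))/(1-γ) ≤ ∫ b in ε..a, kappa γ Γ a b := by
    rw [intervalIntegral.integral_congr (g := fun b => b ^ (-γ) * a ^ (γ-1))
      (fun b hb => by
        rw [Set.uIcc_of_le hεa] at hb
        exact kappa_forward (lt_of_lt_of_le hε hb.1) hb.2)]
    rw [intervalIntegral.integral_mul_const, integral_rpow (Or.inl (by linarith))]
    have key1 : a ^ (-γ+1) * a ^ (γ-1) = 1 := by
      rw [← Real.rpow_add ha0, show -γ+1 + (γ-1) = 0 from by ring, Real.rpow_zero]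
    have key2 : ε ^ (1-γ:ℝ) * a ^ (γ-1) ≤ 2 ^ (γ-1 : ℝ) := by
      have hh1 : a ^ (γ-1) ≤ (2*ε) ^ (γ-1:ℝ) :=
        Real.rpow_le_rpow_of_nonpos (by positivity) ha.1 (by linarith)
      have hh2 : ((2*ε):ℝ) ^ (γ-1:ℝ) = 2 ^ (γ-1:ℝ) * ε ^ (γ-1:ℝ) :=
        Real.mul_rpow (by norm_num) hε.le
      calc ε ^ (1-γ:ℝ) * a ^ (γ-1)
          ≤ ε ^ (1-γ:ℝ) * (2 ^ (γ-1:ℝ) * ε ^ (γ-1:ℝ)) := by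
            rw [← hh2]
            exact mul_le_mul_of_nonneg_left hh1 (Real.rpow_nonneg hε.le _)
        _ = 2 ^ (γ-1:ℝ) * (ε ^ (1-γ:ℝ) * ε ^ (γ-1:ℝ)) := by ring
        _ = 2 ^ (γ-1:ℝ) := by
            rw [← Real.rpow_add hε, show 1-γ+(γ-1) = 0 from by ring, Real.rpow_zero, mul_one]
    rw [div_mul_eq_mul_div, sub_mul, key1, show -γ+1 = 1-γ from by ring]
    exact (div_le_div_iff_of_pos_right (by linarith)).2 (by linarith)
  linarith

theorem Wf_meas : Measurable (Wform γ Γ ε) := by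
  unfold Wform
  exact ((((meas_rpow_const _).sub measurable_const).div_const _).mul
    (meas_rpow_const _)).add
    ((meas_rpow_const _).mul ((measurable_const.sub (meas_rpow_const _)).div_const _))

include hγ0 hγ1 hΓ hε in
theorem Wf_le_const {b : ℝ} (hb : b ∈ Icc ε 1) :
    Wform γ Γ ε b ≤ (1/(Γ - γ + 1) + 1/γ) * ε ^ (-γ) := by
  have hb0 : 0 < b := lt_of_lt_of_le hε hb.1
  refine le_trans (Wf_le hγ0 hγ1 hΓ hb0 hb.2 hε.le) ?_
  have hK : (0:ℝ) ≤ 1/(Γ - γ + 1) + 1/γ := by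
    have h1 : (0:ℝ) < Γ - γ + 1 := by linarith
    have h2 : (0:ℝ) < γ := by linarith
    positivity
  exact mul_le_mul_of_nonneg_left
    (Real.rpow_le_rpow_of_nonpos hε hb.1 (by linarith)) hK

include hγ0 hγ1 hΓ hε in
theorem kappaW_II {a u v : ℝ} (ha : a ∈ Icc ε 1) (hu : u ∈ Icc ε 1) (hv : v ∈ Icc ε 1) :
    IntervalIntegrable (fun b => kappa γ Γ a b * Wform γ Γ ε b) volume u v := by
  refine II_of_bdd ((ε ^ (-(1:ℝ)) + ε ^ (-γ) * ε ^ (-(1 - γ + Γ))) *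
    ((1/(Γ - γ + 1) + 1/γ) * ε ^ (-γ))) (kappa_meas_right.mul Wf_meas) fun x hx => ?_
  have hx' : x ∈ Icc ε 1 := Set.uIcc_subset_Icc hu hv (Set.uIoc_subset_uIcc hx)
  have h1 : 0 ≤ kappa γ Γ a x := kappa_nonneg (le_trans hε.le ha.1) (le_trans hε.le hx'.1)
  have h2 : 0 ≤ Wform γ Γ ε x := Wf_nonneg hγ0 hγ1 hΓ hε hx'
  rw [abs_of_nonneg (mul_nonneg h1 h2)]
  exact mul_le_mul (kappa_le hγ0 hγ1 hΓ hε ha hx') (Wf_le_const hγ0 hγ1 hΓ hε hx') h2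
    (by positivity)

end

section
variable {γ Γ ε : ℝ} (hγ0 : 1/2 ≤ γ) (hγ1 : γ < 1) (hΓ : 0 < Γ) (hε : 0 < ε)

include hγ0 hγ1 hΓ hε in
theorem B_upper {a : ℝ} (ha : a ∈ Icc ε 1) :
    (∫ b in ε..1, kappa γ Γ a b * Wform γ Γ ε b)
      ≤ (1/(Γ - γ + 1) + 1/γ) *
        (a ^ (γ-1) * (∫ b in ε..1, b ^ (-(2*γ)) ) + a ^ (-γ) / Γ) := by
  have hγ : (0:ℝ) < γ := by linarith
  have ha0 : 0 < a := lt_of_lt_of_le hε ha.1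
  have hε1 : ε ≤ 1 := le_trans ha.1 ha.2
  have hK1 : (0:ℝ) ≤ 1/(Γ - γ + 1) + 1/γ := by
    have h1 : (0:ℝ) < Γ - γ + 1 := by linarith
    positivity
  set K1 := 1/(Γ - γ + 1) + 1/γ with hK1def
  -- step 1 : replace Wform by K1 * b^(-γ)
  have hIIg : IntervalIntegrable (fun b : ℝ => kappa γ Γ a b * (K1 * b ^ (-γ))) volume ε 1 := by
    refine II_of_bdd ((ε ^ (-(1:ℝ)) + ε ^ (-γ) * ε ^ (-(1 - γ + Γ))) * (K1 * ε ^ (-γ)))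
      (kappa_meas_right.mul (measurable_const.mul (meas_rpow_const _))) fun x hx => ?_
    have hx' : x ∈ Icc ε 1 := Set.uIcc_subset_Icc ⟨le_rfl, hε1⟩ ⟨hε1, le_rfl⟩
      (Set.uIoc_subset_uIcc hx)
    have h1 : 0 ≤ kappa γ Γ a x := kappa_nonneg ha0.le (le_trans hε.le hx'.1)
    have h2 : (0:ℝ) ≤ x ^ (-γ) := Real.rpow_nonneg (le_trans hε.le hx'.1) _
    rw [abs_of_nonneg (mul_nonneg h1 (mul_nonneg hK1 h2))]
    exact mul_le_mul (kappa_le hγ0 hγ1 hΓ hε ha hx')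
      (mul_le_mul_of_nonneg_left (Real.rpow_le_rpow_of_nonpos hε hx'.1 (by linarith)) hK1)
      (mul_nonneg hK1 h2) (by positivity)
  have step1 : (∫ b in ε..1, kappa γ Γ a b * Wform γ Γ ε b)
      ≤ ∫ b in ε..1, kappa γ Γ a b * (K1 * b ^ (-γ)) := by
    apply intervalIntegral.integral_mono_on hε1
      (kappaW_II hγ0 hγ1 hΓ hε ha ⟨le_rfl, hε1⟩ ⟨hε1, le_rfl⟩) hIIg
    intro x hx
    have hx0 : 0 < x := lt_of_lt_of_le hε hx.1
    exact mul_le_mul_of_nonneg_left (Wf_le hγ0 hγ1 hΓ hx0 hx.2 hε.le)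
      (kappa_nonneg ha0.le hx0.le)
  refine le_trans step1 ?_
  -- step 2 : pull out K1 and split at a
  have e0 : (∫ b in ε..1, kappa γ Γ a b * (K1 * b ^ (-γ)))
      = K1 * ∫ b in ε..1, kappa γ Γ a b * b ^ (-γ) := by
    rw [← intervalIntegral.integral_const_mul]
    exact intervalIntegral.integral_congr fun x hx => by ring
  rw [e0]
  have hIIp : ∀ u v : ℝ, u ∈ Icc ε 1 → v ∈ Icc ε 1 →
      IntervalIntegrable (fun b : ℝ => kappa γ Γ a b * b ^ (-γ)) volume u v := by
    intro u v hu hv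
    refine II_of_bdd ((ε ^ (-(1:ℝ)) + ε ^ (-γ) * ε ^ (-(1 - γ + Γ))) * ε ^ (-γ))
      (kappa_meas_right.mul (meas_rpow_const _)) fun x hx => ?_
    have hx' : x ∈ Icc ε 1 := Set.uIcc_subset_Icc hu hv (Set.uIoc_subset_uIcc hx)
    have h1 : 0 ≤ kappa γ Γ a x := kappa_nonneg ha0.le (le_trans hε.le hx'.1)
    have h2 : (0:ℝ) ≤ x ^ (-γ) := Real.rpow_nonneg (le_trans hε.le hx'.1) _
    rw [abs_of_nonneg (mul_nonneg h1 h2)]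
    exact mul_le_mul (kappa_le hγ0 hγ1 hΓ hε ha hx')
      (Real.rpow_le_rpow_of_nonpos hε hx'.1 (by linarith)) h2 (by positivity)
  rw [← intervalIntegral.integral_add_adjacent_intervals
    (hIIp ε a ⟨le_rfl, hε1⟩ ha) (hIIp a 1 ha ⟨hε1, le_rfl⟩)]
  -- piece 1
  have p1 : (∫ b in ε..a, kappa γ Γ a b * b ^ (-γ))
      ≤ a ^ (γ-1) * ∫ b in ε..1, b ^ (-(2*γ)) := by
    have c1 : (∫ b in ε..a, kappa γ Γ a b * b ^ (-γ))
        = (∫ b in ε..a, b ^ (-(2*γ))) * a ^ (γ-1) := by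
      rw [← intervalIntegral.integral_mul_const]
      refine intervalIntegral.integral_congr fun x hx => ?_
      rw [Set.uIcc_of_le ha.1] at hx
      have hx0 : 0 < x := lt_of_lt_of_le hε hx.1
      rw [kappa_forward hx0 hx.2]
      rw [show x ^ (-γ) * a ^ (γ-1) * x ^ (-γ) = x ^ (-γ) * x ^ (-γ) * a ^ (γ-1) from by ring,
        ← Real.rpow_add hx0, show -γ + -γ = -(2*γ) from by ring]
    rw [c1, mul_comm]
    apply mul_le_mul_of_nonneg_left _ (Real.rpow_nonneg ha0.le _)
    have hr1 : IntervalIntegrable (fun b : ℝ => b ^ (-(2*γ))) volume ε a :=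
      intervalIntegrable_rpow (Or.inr (Set.notMem_uIcc_of_lt hε ha0))
    have hr2 : IntervalIntegrable (fun b : ℝ => b ^ (-(2*γ))) volume a 1 :=
      intervalIntegrable_rpow (Or.inr (Set.notMem_uIcc_of_lt ha0 one_pos))
    rw [← intervalIntegral.integral_add_adjacent_intervals hr1 hr2]
    have : 0 ≤ ∫ b in a..1, b ^ (-(2*γ)) :=
      intervalIntegral.integral_nonneg ha.2
        (fun x hx => Real.rpow_nonneg (le_trans ha0.le hx.1) _)
    linarith
  -- piece 2
  have p2 : (∫ b in a..1, kappa γ Γ a b * b ^ (-γ)) ≤ a ^ (-γ) / Γ := by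
    have c2 : (∫ b in a..1, kappa γ Γ a b * b ^ (-γ))
        = a ^ (Γ-γ) * ∫ b in a..1, b ^ (-(1+Γ)) := by
      rw [← intervalIntegral.integral_const_mul]
      refine intervalIntegral.integral_congr fun x hx => ?_
      rw [Set.uIcc_of_le ha.2] at hx
      have hx0 : 0 < x := lt_of_lt_of_le ha0 hx.1
      rw [kappa_recip hx.1, mul_assoc, ← Real.rpow_add hx0,
        show -(1-γ+Γ) + -γ = -(1+Γ) from by ring]
    rw [c2, integral_rpow (Or.inr ⟨by intro h; exact absurd (by linarith : Γ = (0:ℝ)) (ne_of_gt hΓ),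
      Set.notMem_uIcc_of_lt ha0 one_pos⟩)]
    rw [Real.one_rpow, show -(1+Γ)+1 = -Γ from by ring]
    have flip : (1 - a ^ (-Γ))/(-Γ) = (a ^ (-Γ) - 1)/Γ := by
      rw [div_eq_div_iff (by linarith) (by linarith)]; ring
    rw [flip]
    calc a ^ (Γ-γ) * ((a ^ (-Γ) - 1)/Γ)
        ≤ a ^ (Γ-γ) * (a ^ (-Γ)/Γ) := by
          apply mul_le_mul_of_nonneg_left _ (Real.rpow_nonneg ha0.le _)
          exact (div_le_div_iff_of_pos_right hΓ).2 (by linarith)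
      _ = a ^ (-γ) / Γ := by
          rw [show a ^ (Γ-γ) * (a ^ (-Γ)/Γ) = a ^ (Γ-γ) * a ^ (-Γ) * (1/Γ) from by ring,
            ← Real.rpow_add ha0, show Γ-γ + -Γ = -γ from by ring]
          ring
  have := add_le_add p1 p2
  exact mul_le_mul_of_nonneg_left this hK1

end

section
variable {γ Γ ε : ℝ} (hγ0 : 1/2 ≤ γ) (hγ1 : γ < 1) (hΓ : 0 < Γ) (hε : 0 < ε)

include hγ0 hγ1 hΓ hε in
theorem B_lower {a q : ℝ} (hq1 : 2*ε ≤ q) (hq2 : q ≤ 1/2) (ha : a ∈ Icc (1/2 : ℝ) 1) :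
    1/(4*γ) * a ^ (γ-1) * (∫ b in 2*ε..q, b ^ (-(2*γ)))
      ≤ ∫ b in ε..1, kappa γ Γ a b * Wform γ Γ ε b := by
  have hγ : (0:ℝ) < γ := by linarith
  have ha0 : (0:ℝ) < a := lt_of_lt_of_le (by norm_num) ha.1
  have hε1 : ε ≤ 1 := by linarith
  have h2ε : (2*ε : ℝ) ∈ Icc ε 1 := ⟨by linarith, by linarith⟩
  have hqI : q ∈ Icc ε 1 := ⟨by linarith, by linarith⟩
  have haI : a ∈ Icc ε 1 := ⟨by linarith [ha.1], ha.2⟩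
  have II1 := kappaW_II hγ0 hγ1 hΓ hε haI ⟨le_rfl, hε1⟩ h2ε
  have II2 := kappaW_II hγ0 hγ1 hΓ hε haI h2ε hqI
  have II3 := kappaW_II hγ0 hγ1 hΓ hε haI hqI ⟨hε1, le_rfl⟩
  have nn : ∀ u v : ℝ, u ∈ Icc ε 1 → v ∈ Icc ε 1 → u ≤ v →
      0 ≤ ∫ b in u..v, kappa γ Γ a b * Wform γ Γ ε b := by
    intro u v hu hv huv
    refine intervalIntegral.integral_nonneg huv fun x hx => ?_
    have hx' : x ∈ Icc ε 1 := ⟨le_trans hu.1 hx.1, le_trans hx.2 hv.2⟩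
    exact mul_nonneg (kappa_nonneg ha0.le (le_trans hε.le hx'.1))
      (Wf_nonneg hγ0 hγ1 hΓ hε hx')
  rw [← intervalIntegral.integral_add_adjacent_intervals (II1.trans II2) II3,
    ← intervalIntegral.integral_add_adjacent_intervals II1 II2]
  have mid : 1/(4*γ) * a ^ (γ-1) * (∫ b in 2*ε..q, b ^ (-(2*γ)))
      ≤ ∫ b in 2*ε..q, kappa γ Γ a b * Wform γ Γ ε b := by
    have e : 1/(4*γ) * a ^ (γ-1) * (∫ b in 2*ε..q, b ^ (-(2*γ)))
        = ∫ b in 2*ε..q, b ^ (-(2*γ)) * (1/(4*γ) * a ^ (γ-1)) := by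
      rw [intervalIntegral.integral_mul_const]; ring
    rw [e]
    apply intervalIntegral.integral_mono_on (by linarith)
      ((intervalIntegrable_rpow (Or.inr (Set.notMem_uIcc_of_lt (by linarith)
        (by linarith)))).mul_const _) II2
    intro x hx
    have hx0 : (0:ℝ) < x := lt_of_lt_of_le (by linarith) hx.1
    have hxh : x ∈ Icc (2*ε) (1/2 : ℝ) := ⟨hx.1, le_trans hx.2 hq2⟩
    have hxa : x ≤ a := le_trans hxh.2 ha.1
    rw [kappa_forward hx0 hxa]
    have key : x ^ (-(2*γ)) * (1/(4*γ) * a ^ (γ-1))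
        = x ^ (-γ) * a ^ (γ-1) * (1/(4*γ) * x ^ (-γ)) := by
      rw [show x ^ (-γ) * a ^ (γ-1) * (1/(4*γ) * x ^ (-γ))
          = x ^ (-γ) * x ^ (-γ) * (1/(4*γ) * a ^ (γ-1)) from by ring,
        ← Real.rpow_add hx0, show -γ + -γ = -(2*γ) from by ring]
    rw [key]
    exact mul_le_mul_of_nonneg_left (Wf_ge hγ0 hγ1 hΓ hε hxh)
      (mul_nonneg (Real.rpow_nonneg hx0.le _) (Real.rpow_nonneg ha0.le _))
  have n1 := nn ε (2*ε) ⟨le_rfl, hε1⟩ h2ε (by linarith)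
  have n3 := nn q 1 hqI ⟨hε1, le_rfl⟩ hqI.2
  linarith

end

theorem meas_param {F : ℝ → ℝ → ℝ} (hF : Measurable fun p : ℝ × ℝ => F p.1 p.2) (u v : ℝ) :
    Measurable fun a => ∫ b in u..v, F a b := by
  simp_rw [intervalIntegral.intervalIntegral_eq_integral_uIoc]
  have h : Measurable fun a => ∫ b in Set.uIoc u v, F a b :=
    (MeasureTheory.StronglyMeasurable.integral_prod_right'
      (ν := volume.restrict (Set.uIoc u v)) hF.stronglyMeasurable).measurable
  exact h.const_smul (M := ℝ) _

section
variable {γ Γ ε : ℝ} (hγ0 : 1/2 ≤ γ) (hγ1 : γ < 1) (hΓ : 0 < Γ) (hε : 0 < ε)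

theorem A_meas : Measurable fun a => ∫ b in ε..1, kappa γ Γ a b :=
  meas_param kappa_meas ε 1

theorem Bf_meas : Measurable fun a => ∫ b in ε..1, kappa γ Γ a b * Wform γ Γ ε b :=
  meas_param (kappa_meas.mul (Wf_meas.comp measurable_snd)) ε 1

include hγ0 hγ1 hΓ hε in
theorem A_val_bd (hε1 : ε ≤ 1) {a : ℝ} (ha : a ∈ Icc ε 1) :
    |∫ b in ε..1, kappa γ Γ a b| ≤ |1 - ε| * (ε ^ (-(1:ℝ)) + ε ^ (-γ) * ε ^ (-(1 - γ + Γ))) := by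
  rw [← Real.norm_eq_abs, mul_comm]
  apply intervalIntegral.norm_integral_le_of_norm_le_const
  intro x hx
  rw [Set.uIoc_of_le hε1] at hx
  rw [Real.norm_eq_abs, abs_of_nonneg (kappa_nonneg (le_trans hε.le ha.1)
    (le_trans hε.le hx.1.le))]
  exact kappa_le hγ0 hγ1 hΓ hε ha ⟨hx.1.le, hx.2⟩

include hγ0 hγ1 hΓ hε in
theorem Bf_val_bd (hε1 : ε ≤ 1) {a : ℝ} (ha : a ∈ Icc ε 1) :
    |∫ b in ε..1, kappa γ Γ a b * Wform γ Γ ε b|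
      ≤ |1 - ε| * ((ε ^ (-(1:ℝ)) + ε ^ (-γ) * ε ^ (-(1 - γ + Γ))) *
          ((1/(Γ - γ + 1) + 1/γ) * ε ^ (-γ))) := by
  rw [← Real.norm_eq_abs, mul_comm]
  apply intervalIntegral.norm_integral_le_of_norm_le_const
  intro x hx
  rw [Set.uIoc_of_le hε1] at hx
  have hx' : x ∈ Icc ε 1 := ⟨hx.1.le, hx.2⟩
  have h1 : 0 ≤ kappa γ Γ a x := kappa_nonneg (le_trans hε.le ha.1) (le_trans hε.le hx'.1)
  have h2 : 0 ≤ Wform γ Γ ε x := Wf_nonneg hγ0 hγ1 hΓ hε hx'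
  rw [Real.norm_eq_abs, abs_of_nonneg (mul_nonneg h1 h2)]
  exact mul_le_mul (kappa_le hγ0 hγ1 hΓ hε ha hx') (Wf_le_const hγ0 hγ1 hΓ hε hx') h2
    (by positivity)

include hγ0 hγ1 hΓ hε in
theorem ABf_II (hε1 : ε ≤ 1) {u v : ℝ} (hu : u ∈ Icc ε 1) (hv : v ∈ Icc ε 1) :
    IntervalIntegrable (fun a => (∫ b in ε..1, kappa γ Γ a b) *
      (∫ b in ε..1, kappa γ Γ a b * Wform γ Γ ε b)) volume u v := by
  refine II_of_bdd ((|1 - ε| * (ε ^ (-(1:ℝ)) + ε ^ (-γ) * ε ^ (-(1 - γ + Γ)))) *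
      (|1 - ε| * ((ε ^ (-(1:ℝ)) + ε ^ (-γ) * ε ^ (-(1 - γ + Γ))) *
          ((1/(Γ - γ + 1) + 1/γ) * ε ^ (-γ)))))
    (A_meas.mul Bf_meas) fun x hx => ?_
  have hx' : x ∈ Icc ε 1 := Set.uIcc_subset_Icc hu hv (Set.uIoc_subset_uIcc hx)
  rw [abs_mul]
  exact mul_le_mul (A_val_bd hγ0 hγ1 hΓ hε hε1 hx') (Bf_val_bd hγ0 hγ1 hΓ hε hε1 hx')
    (abs_nonneg _) (by positivity)

include hγ0 hγ1 hΓ hε in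
theorem A_nonneg (hε1 : ε ≤ 1) {a : ℝ} (ha : 0 ≤ a) :
    0 ≤ ∫ b in ε..1, kappa γ Γ a b :=
  intervalIntegral.integral_nonneg hε1 fun x hx => kappa_nonneg ha (le_trans hε.le hx.1)

include hγ0 hγ1 hΓ hε in
theorem Bf_nonneg (hε1 : ε ≤ 1) {a : ℝ} (ha : 0 ≤ a) :
    0 ≤ ∫ b in ε..1, kappa γ Γ a b * Wform γ Γ ε b :=
  intervalIntegral.integral_nonneg hε1 fun x hx =>
    mul_nonneg (kappa_nonneg ha (le_trans hε.le hx.1)) (Wf_nonneg hγ0 hγ1 hΓ hε hx)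

end

section
variable {γ Γ ε : ℝ} (hγ0 : 1/2 ≤ γ) (hγ1 : γ < 1) (hΓ : 0 < Γ) (hε : 0 < ε)

include hγ0 hγ1 hΓ hε in
theorem oBT_eq (hε1 : ε ≤ 1) :
    openBowTie γ Γ ε = ∫ a in ε..1,
      (∫ b in ε..1, kappa γ Γ a b) * (∫ b in ε..1, kappa γ Γ a b * Wform γ Γ ε b) := by
  unfold openBowTie
  refine intervalIntegral.integral_congr fun a _ => ?_
  congr 1
  refine intervalIntegral.integral_congr fun b hb => ?_
  rw [Set.uIcc_of_le hε1] at hb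
  rw [W_eq hγ0 hγ1 hΓ hε hε1 hb]

include hγ0 hγ1 hΓ hε in
theorem master_upper (hε1 : ε ≤ 1) :
    openBowTie γ Γ ε ≤ (1/(1-γ) + 1/(Γ - min γ Γ/2)) * (1/(Γ-γ+1) + 1/γ) *
      ((∫ b in ε..1, b ^ (-(2*γ))) + ε ^ (1-2*γ)/Γ) * (1/(min γ Γ/2)) := by
  have hγ : (0:ℝ) < γ := by linarith
  set δ := min γ Γ / 2 with hδdef
  have hδ0 : 0 < δ := by have := lt_min hγ hΓ; positivity
  have hδγ : δ < γ := by have := min_le_left γ Γ; simp only [hδdef]; linarith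
  have hδΓ : δ < Γ := by have := min_le_right γ Γ; simp only [hδdef]; linarith
  set KA := 1/(1-γ) + 1/(Γ - δ) with hKAdef
  set K1 := 1/(Γ-γ+1) + 1/γ with hK1def
  set J := ∫ b in ε..1, b ^ (-(2*γ)) with hJdef
  have hKA0 : 0 ≤ KA := by
    rw [hKAdef]
    have h1 : (0:ℝ) < 1 - γ := by linarith
    have h2 : (0:ℝ) < Γ - δ := by linarith
    positivity
  have hK10 : 0 ≤ K1 := by
    rw [hK1def]
    have h1 : (0:ℝ) < Γ - γ + 1 := by linarith
    positivity
  have hJ0 : 0 ≤ J :=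
    intervalIntegral.integral_nonneg hε1 fun x hx => Real.rpow_nonneg (le_trans hε.le hx.1) _
  rw [oBT_eq hγ0 hγ1 hΓ hε hε1]
  have hεX : (0:ℝ) ≤ ε ^ (1-2*γ) := Real.rpow_nonneg hε.le _
  have step : (∫ a in ε..1,
      (∫ b in ε..1, kappa γ Γ a b) * (∫ b in ε..1, kappa γ Γ a b * Wform γ Γ ε b))
      ≤ ∫ a in ε..1, (KA * K1 * (J + ε ^ (1-2*γ)/Γ)) * a ^ (δ - 1) := by
    apply intervalIntegral.integral_mono_on hε1
      (ABf_II hγ0 hγ1 hΓ hε hε1 ⟨le_rfl, hε1⟩ ⟨hε1, le_rfl⟩)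
      ((intervalIntegrable_rpow (Or.inr (Set.notMem_uIcc_of_lt hε one_pos))).const_mul _)
    intro a ha
    have ha0 : 0 < a := lt_of_lt_of_le hε ha.1
    have c1 : (∫ b in ε..1, kappa γ Γ a b) * (∫ b in ε..1, kappa γ Γ a b * Wform γ Γ ε b)
        ≤ (KA * a ^ (δ - γ)) * (K1 * (a ^ (γ-1) * J + a ^ (-γ)/Γ)) := by
      apply mul_le_mul (A_upper hγ0 hγ1 hΓ hε ha) ?_
        (Bf_nonneg hγ0 hγ1 hΓ hε hε1 ha0.le) (by positivity)
      have := B_upper hγ0 hγ1 hΓ hε ha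
      rw [← hK1def, ← hJdef] at this
      exact this
    refine le_trans c1 ?_
    have e1 : a ^ (δ - γ) * a ^ (γ-1) = a ^ (δ-1) := by
      rw [← Real.rpow_add ha0]; congr 1; ring
    have e2 : a ^ (δ - γ) * a ^ (-γ) ≤ a ^ (δ-1) * ε ^ (1-2*γ) := by
      have : a ^ (δ - γ) * a ^ (-γ) = a ^ (δ-1) * a ^ (1-2*γ) := by
        rw [← Real.rpow_add ha0, ← Real.rpow_add ha0]; congr 1; ring
      rw [this]
      exact mul_le_mul_of_nonneg_left
        (Real.rpow_le_rpow_of_nonpos hε ha.1 (by linarith)) (Real.rpow_nonneg ha0.le _)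
    calc (KA * a ^ (δ - γ)) * (K1 * (a ^ (γ-1) * J + a ^ (-γ)/Γ))
        = KA * K1 * ((a ^ (δ - γ) * a ^ (γ-1)) * J + (a ^ (δ - γ) * a ^ (-γ))/Γ) := by ring
      _ ≤ KA * K1 * (a ^ (δ-1) * J + (a ^ (δ-1) * ε ^ (1-2*γ))/Γ) := by
          apply mul_le_mul_of_nonneg_left _ (mul_nonneg hKA0 hK10)
          rw [e1]
          apply add_le_add le_rfl
          exact (div_le_div_iff_of_pos_right hΓ).2 e2
      _ = (KA * K1 * (J + ε ^ (1-2*γ)/Γ)) * a ^ (δ - 1) := by ring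
  refine le_trans step ?_
  rw [intervalIntegral.integral_const_mul,
    integral_rpow (Or.inr ⟨ne_of_gt (by linarith), Set.notMem_uIcc_of_lt hε one_pos⟩),
    Real.one_rpow, show δ-1+1 = δ from by ring]
  have hc0 : 0 ≤ KA * K1 * (J + ε ^ (1-2*γ)/Γ) := by positivity
  have hεδ : 0 ≤ ε ^ δ := Real.rpow_nonneg hε.le _
  calc KA * K1 * (J + ε ^ (1-2*γ)/Γ) * ((1 - ε ^ δ)/δ)
      ≤ KA * K1 * (J + ε ^ (1-2*γ)/Γ) * (1/δ) := by
        apply mul_le_mul_of_nonneg_left _ hc0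
        exact (div_le_div_iff_of_pos_right hδ0).2 (by linarith)
    _ = KA * K1 * (J + ε ^ (1-2*γ)/Γ) * (1/δ) := rfl

end

section
variable {γ Γ ε : ℝ} (hγ0 : 1/2 ≤ γ) (hγ1 : γ < 1) (hΓ : 0 < Γ) (hε : 0 < ε)

include hγ0 hγ1 hΓ hε in
theorem master_lower (hεs : ε ≤ 1/8) {q : ℝ} (hq1 : 2*ε ≤ q) (hq2 : q ≤ 1/2) :
    (1 - 2 ^ (γ-1:ℝ))/(1-γ) * (1/(4*γ)) * (∫ b in 2*ε..q, b ^ (-(2*γ))) * (1/2)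
      ≤ openBowTie γ Γ ε := by
  have hγ : (0:ℝ) < γ := by linarith
  have hε1 : ε ≤ 1 := by linarith
  have hcA : (0:ℝ) ≤ (1 - 2 ^ (γ-1:ℝ))/(1-γ) := by
    have h2 : (2:ℝ) ^ (γ-1:ℝ) < 1 :=
      Real.rpow_lt_one_of_one_lt_of_neg one_lt_two (by linarith)
    apply div_nonneg (by linarith) (by linarith)
  have hJq : (0:ℝ) ≤ ∫ b in 2*ε..q, b ^ (-(2*γ)) :=
    intervalIntegral.integral_nonneg hq1 fun x hx =>
      Real.rpow_nonneg (le_trans (by linarith) hx.1) _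
  set Jq := ∫ b in 2*ε..q, b ^ (-(2*γ)) with hJqdef
  rw [oBT_eq hγ0 hγ1 hΓ hε hε1]
  have hhalf : (1/2 : ℝ) ∈ Icc ε 1 := ⟨by linarith, by norm_num⟩
  rw [← intervalIntegral.integral_add_adjacent_intervals
    (ABf_II hγ0 hγ1 hΓ hε hε1 ⟨le_rfl, hε1⟩ hhalf)
    (ABf_II hγ0 hγ1 hΓ hε hε1 hhalf ⟨hε1, le_rfl⟩)]
  have n1 : 0 ≤ ∫ a in ε..(1/2:ℝ),
      (∫ b in ε..1, kappa γ Γ a b) * (∫ b in ε..1, kappa γ Γ a b * Wform γ Γ ε b) := by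
    refine intervalIntegral.integral_nonneg (by linarith) fun x hx => ?_
    have hx0 : (0:ℝ) ≤ x := le_trans hε.le hx.1
    exact mul_nonneg (A_nonneg hγ0 hγ1 hΓ hε hε1 hx0) (Bf_nonneg hγ0 hγ1 hΓ hε hε1 hx0)
  have n2 : (1 - 2 ^ (γ-1:ℝ))/(1-γ) * (1/(4*γ)) * Jq * (1/2)
      ≤ ∫ a in (1/2:ℝ)..1,
        (∫ b in ε..1, kappa γ Γ a b) * (∫ b in ε..1, kappa γ Γ a b * Wform γ Γ ε b) := by
    have step1 : ((1 - 2 ^ (γ-1:ℝ))/(1-γ) * (1/(4*γ)) * Jq) * ∫ a in (1/2:ℝ)..1, a ^ (γ-1)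
        ≤ ∫ a in (1/2:ℝ)..1,
          (∫ b in ε..1, kappa γ Γ a b) * (∫ b in ε..1, kappa γ Γ a b * Wform γ Γ ε b) := by
      rw [← intervalIntegral.integral_const_mul]
      apply intervalIntegral.integral_mono_on (by norm_num)
        ((intervalIntegrable_rpow (Or.inr (Set.notMem_uIcc_of_lt (by norm_num) one_pos))).const_mul _)
        (ABf_II hγ0 hγ1 hΓ hε hε1 hhalf ⟨hε1, le_rfl⟩)
      intro a ha
      have ha0 : (0:ℝ) < a := lt_of_lt_of_le (by norm_num) ha.1
      have hA := A_lower hγ0 hγ1 hΓ hε (a := a) ⟨by linarith [ha.1], ha.2⟩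
      have hB := B_lower hγ0 hγ1 hΓ hε hq1 hq2 (a := a) ⟨ha.1, ha.2⟩
      rw [← hJqdef] at hB
      have hBlb0 : (0:ℝ) ≤ 1/(4*γ) * a ^ (γ-1) * Jq := by
        have := Real.rpow_nonneg ha0.le (γ-1)
        positivity
      calc (1 - 2 ^ (γ-1:ℝ))/(1-γ) * (1/(4*γ)) * Jq * a ^ (γ-1)
          = (1 - 2 ^ (γ-1:ℝ))/(1-γ) * (1/(4*γ) * a ^ (γ-1) * Jq) := by ring
        _ ≤ (∫ b in ε..1, kappa γ Γ a b) * (∫ b in ε..1, kappa γ Γ a b * Wform γ Γ ε b) :=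
            mul_le_mul hA hB hBlb0 (A_nonneg hγ0 hγ1 hΓ hε hε1 ha0.le)
    have step2 : (1/2 : ℝ) ≤ ∫ a in (1/2:ℝ)..1, a ^ (γ-1) := by
      have e : (∫ a in (1/2:ℝ)..1, (1:ℝ)) = 1/2 := by simp; norm_num
      calc (1/2:ℝ) = ∫ a in (1/2:ℝ)..1, (1:ℝ) := e.symm
        _ ≤ ∫ a in (1/2:ℝ)..1, a ^ (γ-1) := by
            apply intervalIntegral.integral_mono_on (by norm_num)
              intervalIntegrable_const
              (intervalIntegrable_rpow (Or.inr (Set.notMem_uIcc_of_lt (by norm_num) one_pos)))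
            intro x hx
            exact Real.one_le_rpow_of_pos_of_le_one_of_nonpos
              (lt_of_lt_of_le (by norm_num) hx.1) hx.2 (by linarith)
    calc (1 - 2 ^ (γ-1:ℝ))/(1-γ) * (1/(4*γ)) * Jq * (1/2)
        ≤ ((1 - 2 ^ (γ-1:ℝ))/(1-γ) * (1/(4*γ)) * Jq) * ∫ a in (1/2:ℝ)..1, a ^ (γ-1) := by
          apply mul_le_mul_of_nonneg_left step2 (by positivity)
      _ ≤ _ := step1
  linarith

end

theorem Jlog {γ : ℝ} (hγeq : γ = 1/2) {u v : ℝ} (hu : 0 < u) (hv : 0 < v) :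
    (∫ b in u..v, b ^ (-(2*γ))) = Real.log (v/u) := by
  have e : ∀ b : ℝ, b ^ (-(2*γ)) = b⁻¹ := fun b => by
    rw [show -(2*γ) = (-1:ℝ) from by rw [hγeq]; norm_num, Real.rpow_neg_one]
  simp_rw [e]
  exact integral_inv (Set.notMem_uIcc_of_lt hu hv)

theorem Jub {γ ε : ℝ} (hlt : 1/2 < γ) (hε : 0 < ε) (hε1 : ε ≤ 1) :
    (∫ b in ε..1, b ^ (-(2*γ))) ≤ ε ^ (1-2*γ) / (2*γ-1) := by
  rw [integral_rpow (Or.inr ⟨by intro h; rw [show -(2*γ) = -1 ↔ γ = 1/2 from by constructor <;> intro <;> linarith] at h; linarith,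
    Set.notMem_uIcc_of_lt hε one_pos⟩)]
  rw [Real.one_rpow, show -(2*γ)+1 = 1-2*γ from by ring]
  rw [show (1 - ε ^ (1-2*γ))/(1-2*γ) = (ε ^ (1-2*γ) - 1)/(2*γ-1) from by
    rw [div_eq_div_iff (by linarith) (by linarith)]; ring]
  exact (div_le_div_iff_of_pos_right (by linarith)).2 (by linarith)

theorem Jqlb {γ ε : ℝ} (hγ1 : γ < 1) (hlt : 1/2 < γ) (hε : 0 < ε) :
    2 * (4:ℝ) ^ (-(2*γ)) * ε ^ (1-2*γ) ≤ ∫ b in 2*ε..4*ε, b ^ (-(2*γ)) := by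
  have h4ε : (0:ℝ) < 4*ε := by linarith
  have step : (∫ b in 2*ε..4*ε, ((4*ε : ℝ) ^ (-(2*γ)))) ≤ ∫ b in 2*ε..4*ε, b ^ (-(2*γ)) := by
    apply intervalIntegral.integral_mono_on (by linarith) intervalIntegrable_const
      (intervalIntegrable_rpow (Or.inr (Set.notMem_uIcc_of_lt (by linarith) h4ε)))
    intro x hx
    exact Real.rpow_le_rpow_of_nonpos (lt_of_lt_of_le (by linarith) hx.1) hx.2 (by linarith)
  refine le_trans (le_of_eq ?_) step
  rw [intervalIntegral.integral_const, smul_eq_mul]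
  rw [Real.mul_rpow (by norm_num) hε.le]
  rw [show (4*ε - 2*ε) * ((4:ℝ) ^ (-(2*γ)) * ε ^ (-(2*γ)))
      = 2 * (4:ℝ) ^ (-(2*γ)) * (ε * ε ^ (-(2*γ))) from by ring]
  congr 1
  rw [show ε * ε ^ (-(2*γ)) = ε ^ (1:ℝ) * ε ^ (-(2*γ)) from by rw [Real.rpow_one],
    ← Real.rpow_add hε, show (1:ℝ) + -(2*γ) = 1-2*γ from by ring]

/-- Growth of the truncated expected open-bow-tie count for `γ ∈ [1/2,1)` and
`Γ > 0`: it is of order `log(1/ε)` if `γ = 1/2` and of order `ε^{1-2γ}` if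
`γ ∈ (1/2,1)`, for small truncation `ε`. -/
theorem stmt17 (γ Γ : ℝ) (hγ0 : 1 / 2 ≤ γ) (hγ1 : γ < 1) (hΓ : 0 < Γ) :
    ∃ c C ε₀ : ℝ, 0 < c ∧ c ≤ C ∧ 0 < ε₀ ∧ ε₀ < 1 ∧
      ∀ ε : ℝ, 0 < ε → ε < ε₀ →
        (γ = 1 / 2 →
          c * Real.log (1 / ε) ≤ openBowTie γ Γ ε ∧
          openBowTie γ Γ ε ≤ C * Real.log (1 / ε)) ∧
        (1 / 2 < γ →
          c * ε ^ (1 - 2 * γ) ≤ openBowTie γ Γ ε ∧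
          openBowTie γ Γ ε ≤ C * ε ^ (1 - 2 * γ)) := by
  have hγ : (0:ℝ) < γ := by linarith
  have h1γ : (0:ℝ) < 1 - γ := by linarith
  have hδ0 : (0:ℝ) < min γ Γ / 2 := by have := lt_min hγ hΓ; positivity
  have hδΓ : min γ Γ / 2 < Γ := by have := min_le_right γ Γ; linarith
  have hsγ : (0:ℝ) < Γ - γ + 1 := by linarith
  have hcA0 : (0:ℝ) < (1 - 2 ^ (γ-1:ℝ))/(1-γ) := by
    have h2 : (2:ℝ) ^ (γ-1:ℝ) < 1 :=
      Real.rpow_lt_one_of_one_lt_of_neg one_lt_two (by linarith)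
    apply div_pos (by linarith) h1γ
  have hP0 : (0:ℝ) < (1/(1-γ) + 1/(Γ - min γ Γ/2)) * (1/(Γ-γ+1) + 1/γ) := by
    have h2 : (0:ℝ) < Γ - min γ Γ/2 := by linarith
    positivity
  rcases eq_or_lt_of_le hγ0 with heq | hlt
  · -- γ = 1/2
    refine ⟨min ((1 - 2 ^ (γ-1:ℝ))/(1-γ) * (1/(4*γ)) * (1/4))
        ((1/(1-γ) + 1/(Γ - min γ Γ/2)) * (1/(Γ-γ+1) + 1/γ) * (1 + 1/Γ) * (1/(min γ Γ/2))),
      max ((1 - 2 ^ (γ-1:ℝ))/(1-γ) * (1/(4*γ)) * (1/4))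
        ((1/(1-γ) + 1/(Γ - min γ Γ/2)) * (1/(Γ-γ+1) + 1/γ) * (1 + 1/Γ) * (1/(min γ Γ/2))),
      1/32, ?_, ?_, by norm_num, by norm_num, ?_⟩
    · apply lt_min (by positivity) (by positivity)
    · exact le_trans (min_le_left _ _) (le_max_left _ _)
    intro ε hε hεs
    have hε1 : ε ≤ 1 := by linarith
    constructor
    · intro _
      have hγeq : γ = 1/2 := heq.symm
      set L := Real.log (1/ε) with hLdef
      have h32 : (32:ℝ) ≤ 1/ε := by rw [le_div_iff₀ hε]; linarith
      have hL1 : 1 ≤ L := by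
        have h1 : Real.log 32 ≤ L := Real.log_le_log (by norm_num) h32
        have h2 : (1:ℝ) < Real.log 32 := by
          rw [Real.lt_log_iff_exp_lt (by norm_num)]
          have := Real.exp_one_lt_d9
          linarith
        linarith
      have hL0 : (0:ℝ) ≤ L := by linarith
      constructor
      · -- lower bound
        have hml := master_lower hγ0 hγ1 hΓ hε (by linarith) (q := 1/2)
          (by linarith) le_rfl
        set Jq := ∫ b in 2*ε..(1/2:ℝ), b ^ (-(2*γ)) with hJqdef
        have hJq : Jq = Real.log ((1/2)/(2*ε)) := Jlog hγeq (by linarith) (by norm_num)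
        have hqe : ((1/2:ℝ))/(2*ε) = (1/ε)/4 := by field_simp; ring
        have hJq2 : Jq = L - Real.log 4 := by
          rw [hJq, hqe, Real.log_div (by positivity) (by norm_num)]
        have hlog4 : 2 * Real.log 4 = Real.log 16 := by
          rw [show (16:ℝ) = 4^(2:ℕ) from by norm_num, Real.log_pow]
          push_cast; ring
        have h16 : Real.log 16 ≤ L := Real.log_le_log (by norm_num) (by linarith)
        have hJqL : (1/2) * L ≤ Jq := by rw [hJq2]; linarith
        have h0 : (0:ℝ) ≤ (1 - 2 ^ (γ-1:ℝ))/(1-γ) * (1/(4*γ)) := by positivity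
        calc min ((1 - 2 ^ (γ-1:ℝ))/(1-γ) * (1/(4*γ)) * (1/4))
              ((1/(1-γ) + 1/(Γ - min γ Γ/2)) * (1/(Γ-γ+1) + 1/γ) * (1 + 1/Γ) * (1/(min γ Γ/2))) * L
            ≤ ((1 - 2 ^ (γ-1:ℝ))/(1-γ) * (1/(4*γ)) * (1/4)) * L :=
              mul_le_mul_of_nonneg_right (min_le_left _ _) hL0
          _ = (1 - 2 ^ (γ-1:ℝ))/(1-γ) * (1/(4*γ)) * ((1/2)*L) * (1/2) := by ring
          _ ≤ (1 - 2 ^ (γ-1:ℝ))/(1-γ) * (1/(4*γ)) * Jq * (1/2) := by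
              apply mul_le_mul_of_nonneg_right
                (mul_le_mul_of_nonneg_left hJqL h0) (by norm_num)
          _ ≤ openBowTie γ Γ ε := hml
      · -- upper bound
        have hmu := master_upper hγ0 hγ1 hΓ hε hε1
        have hJ : (∫ b in ε..1, b ^ (-(2*γ))) = L := by
          rw [Jlog hγeq hε one_pos]
        have hX : ε ^ (1-2*γ) = 1 := by
          rw [show 1-2*γ = (0:ℝ) from by rw [hγeq]; norm_num, Real.rpow_zero]
        rw [hJ, hX] at hmu
        have h1 : L + 1/Γ ≤ (1 + 1/Γ) * L := by
          have : 1/Γ * 1 ≤ 1/Γ * L := mul_le_mul_of_nonneg_left hL1 (by positivity)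
          nlinarith
        refine le_trans hmu ?_
        calc (1/(1-γ) + 1/(Γ - min γ Γ/2)) * (1/(Γ-γ+1) + 1/γ) * (L + 1/Γ) * (1/(min γ Γ/2))
            ≤ (1/(1-γ) + 1/(Γ - min γ Γ/2)) * (1/(Γ-γ+1) + 1/γ) * ((1 + 1/Γ)*L) * (1/(min γ Γ/2)) := by
              apply mul_le_mul_of_nonneg_right
                (mul_le_mul_of_nonneg_left h1 hP0.le) (by positivity)
          _ = ((1/(1-γ) + 1/(Γ - min γ Γ/2)) * (1/(Γ-γ+1) + 1/γ) * (1 + 1/Γ) * (1/(min γ Γ/2))) * L := by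
              ring
          _ ≤ max ((1 - 2 ^ (γ-1:ℝ))/(1-γ) * (1/(4*γ)) * (1/4))
              ((1/(1-γ) + 1/(Γ - min γ Γ/2)) * (1/(Γ-γ+1) + 1/γ) * (1 + 1/Γ) * (1/(min γ Γ/2))) * L :=
              mul_le_mul_of_nonneg_right (le_max_right _ _) hL0
    · intro hcontra
      exact absurd hcontra (by rw [← heq]; exact lt_irrefl _)
  · -- 1/2 < γ
    refine ⟨min ((1 - 2 ^ (γ-1:ℝ))/(1-γ) * (1/(4*γ)) * (4:ℝ) ^ (-(2*γ)))
        ((1/(1-γ) + 1/(Γ - min γ Γ/2)) * (1/(Γ-γ+1) + 1/γ) * (1/(2*γ-1) + 1/Γ) * (1/(min γ Γ/2))),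
      max ((1 - 2 ^ (γ-1:ℝ))/(1-γ) * (1/(4*γ)) * (4:ℝ) ^ (-(2*γ)))
        ((1/(1-γ) + 1/(Γ - min γ Γ/2)) * (1/(Γ-γ+1) + 1/γ) * (1/(2*γ-1) + 1/Γ) * (1/(min γ Γ/2))),
      1/32, ?_, ?_, by norm_num, by norm_num, ?_⟩
    · have h21 : (0:ℝ) < 2*γ-1 := by linarith
      apply lt_min ?_ (by positivity)
      have h4 : (0:ℝ) < (4:ℝ) ^ (-(2*γ)) := Real.rpow_pos_of_pos (by norm_num) _
      positivity
    · exact le_trans (min_le_left _ _) (le_max_left _ _)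
    intro ε hε hεs
    have hε1 : ε ≤ 1 := by linarith
    have hεX0 : (0:ℝ) ≤ ε ^ (1-2*γ) := Real.rpow_nonneg hε.le _
    constructor
    · intro h
      exact absurd hlt (by rw [h]; exact lt_irrefl _)
    · intro _
      constructor
      · -- lower bound
        have hml := master_lower hγ0 hγ1 hΓ hε (by linarith) (q := 4*ε)
          (by linarith) (by linarith)
        have hJq := Jqlb hγ1 hlt hε
        have h0 : (0:ℝ) ≤ (1 - 2 ^ (γ-1:ℝ))/(1-γ) * (1/(4*γ)) := by positivity
        calc min ((1 - 2 ^ (γ-1:ℝ))/(1-γ) * (1/(4*γ)) * (4:ℝ) ^ (-(2*γ)))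
              ((1/(1-γ) + 1/(Γ - min γ Γ/2)) * (1/(Γ-γ+1) + 1/γ) * (1/(2*γ-1) + 1/Γ) * (1/(min γ Γ/2)))
              * ε ^ (1-2*γ)
            ≤ ((1 - 2 ^ (γ-1:ℝ))/(1-γ) * (1/(4*γ)) * (4:ℝ) ^ (-(2*γ))) * ε ^ (1-2*γ) :=
              mul_le_mul_of_nonneg_right (min_le_left _ _) hεX0
          _ = (1 - 2 ^ (γ-1:ℝ))/(1-γ) * (1/(4*γ)) * (2 * (4:ℝ) ^ (-(2*γ)) * ε ^ (1-2*γ)) * (1/2) := by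
              ring
          _ ≤ (1 - 2 ^ (γ-1:ℝ))/(1-γ) * (1/(4*γ)) * (∫ b in 2*ε..4*ε, b ^ (-(2*γ))) * (1/2) := by
              apply mul_le_mul_of_nonneg_right
                (mul_le_mul_of_nonneg_left hJq h0) (by norm_num)
          _ ≤ openBowTie γ Γ ε := hml
      · -- upper bound
        have hmu := master_upper hγ0 hγ1 hΓ hε hε1
        have hJ := Jub hlt hε hε1
        refine le_trans hmu ?_
        have h1 : (∫ b in ε..1, b ^ (-(2*γ))) + ε ^ (1-2*γ)/Γ
            ≤ (1/(2*γ-1) + 1/Γ) * ε ^ (1-2*γ) := by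
          have h2 : ε ^ (1-2*γ)/(2*γ-1) = 1/(2*γ-1) * ε ^ (1-2*γ) := by ring
          have h3 : ε ^ (1-2*γ)/Γ = 1/Γ * ε ^ (1-2*γ) := by ring
          rw [h2] at hJ
          linarith [hJ]
        calc (1/(1-γ) + 1/(Γ - min γ Γ/2)) * (1/(Γ-γ+1) + 1/γ) *
              ((∫ b in ε..1, b ^ (-(2*γ))) + ε ^ (1-2*γ)/Γ) * (1/(min γ Γ/2))
            ≤ (1/(1-γ) + 1/(Γ - min γ Γ/2)) * (1/(Γ-γ+1) + 1/γ) *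
              ((1/(2*γ-1) + 1/Γ) * ε ^ (1-2*γ)) * (1/(min γ Γ/2)) := by
              apply mul_le_mul_of_nonneg_right
                (mul_le_mul_of_nonneg_left h1 hP0.le) (by positivity)
          _ = ((1/(1-γ) + 1/(Γ - min γ Γ/2)) * (1/(Γ-γ+1) + 1/γ) * (1/(2*γ-1) + 1/Γ) *
              (1/(min γ Γ/2))) * ε ^ (1-2*γ) := by ring
          _ ≤ max ((1 - 2 ^ (γ-1:ℝ))/(1-γ) * (1/(4*γ)) * (4:ℝ) ^ (-(2*γ)))
              ((1/(1-γ) + 1/(Γ - min γ Γ/2)) * (1/(Γ-γ+1) + 1/γ) * (1/(2*γ-1) + 1/Γ) * (1/(min γ Γ/2)))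
              * ε ^ (1-2*γ) :=
              mul_le_mul_of_nonneg_right (le_max_right _ _) hεX0
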